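/- If q ∈ F_co(G) and q' ∈ ℰ⁺ satisfies q' ≤ q pointwise, then q' ∈ F_co(G). (Hint from the paper: with h := 1_{{q>0}} q'/q one has G(fq') = G(fhq) for every f ∈ ℰ_b, so K_{q'} = K_q ∘ M_h where M_h is the bounded multiplication operator by h.) -/

import Mathlib

open MeasureTheory ENNReal NNReal Filter

/-- `Gop μ G q x = ∫ G(x,y) q(y) dμ(y)`. -/
noncomputable def Gop {E : Type*} [MeasurableSpace E] (μ : Measure E)
    (G : E → E → ℝ≥0∞) (q : E → ℝ≥0∞) (x : E) : ℝ≥0∞ :=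
  ∫⁻ y, G x y * q y ∂μ

/-- The kernel operator `K_q f x = ∫ G(x,y) f(y) q(y) dμ(y)` acting on real functions. -/
noncomputable def Kq {E : Type*} [MeasurableSpace E] (μ : Measure E)
    (G : E → E → ℝ≥0∞) (q : E → ℝ≥0∞) (f : E → ℝ) (x : E) : ℝ :=
  ∫ y, (G x y * q y).toReal * f y ∂μ

/-- Compactness of `K_q` on the space of bounded measurable functions with sup-norm:
the image of the unit ball is totally bounded for the uniformity of uniform convergence. -/
def KqCompact {E : Type*} [MeasurableSpace E] (μ : Measure E)
    (G : E → E → ℝ≥0∞) (q : E → ℝ≥0∞) : Prop :=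
  TotallyBounded ((fun f => UniformFun.ofFun (Kq μ G q f)) ''
    {f : E → ℝ | Measurable f ∧ ∀ x, |f x| ≤ 1})

/-- `q ∈ F_co(G)`: `q` measurable, `Gq` bounded and `K_q` compact on `ℰ_b`. -/
def MemFco {E : Type*} [MeasurableSpace E] (μ : Measure E)
    (G : E → E → ℝ≥0∞) (q : E → ℝ≥0∞) : Prop :=
  Measurable q ∧ (∃ M : ℝ≥0, ∀ x, Gop μ G q x ≤ M) ∧ KqCompact μ G q

/-- `q ∈ F_ui(G)`: `q` measurable and `{G(x,·)q : x ∈ E}` is uniformly integrable. -/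
def MemFui {E : Type*} [MeasurableSpace E] (μ : Measure E)
    (G : E → E → ℝ≥0∞) (q : E → ℝ≥0∞) : Prop :=
  Measurable q ∧ ∀ ε : ℝ≥0∞, 0 < ε → ∃ g : E → ℝ≥0∞, Measurable g ∧
    (∫⁻ y, g y ∂μ) < ⊤ ∧
    ∀ x : E, (∫⁻ y in {y | g y ≤ G x y * q y}, G x y * q y ∂μ) ≤ ε

/-- `F_co(G)` is solid: if `q ∈ F_co(G)` and `q' ≤ q`, then `q' ∈ F_co(G)`. -/
theorem stmt4 {E : Type*} [MeasurableSpace E] (μ : Measure E)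
    (G : E → E → ℝ≥0∞) (hG : Measurable (Function.uncurry G))
    (q q' : E → ℝ≥0∞) (hq : MemFco μ G q)
    (hq' : Measurable q') (hle : ∀ y, q' y ≤ q y) :
    MemFco μ G q' := by
  obtain ⟨hqm, ⟨M, hM⟩, hcomp⟩ := hq
  refine ⟨hq', ⟨M, fun x => le_trans (lintegral_mono fun y => mul_le_mul_right (hle y) _) (hM x)⟩, ?_⟩
  set h : E → ℝ := fun y => (q' y / q y).toReal with hh
  have hhm : Measurable h := (hq'.div hqm).ennreal_toReal
  have hhle : ∀ y, |h y| ≤ 1 := by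
    intro y
    rw [abs_of_nonneg ENNReal.toReal_nonneg]
    have hle1 : q' y / q y ≤ 1 := ENNReal.div_le_of_le_mul (by simpa using hle y)
    simpa using ENNReal.toReal_mono one_ne_top hle1
  have key : ∀ f : E → ℝ, Kq μ G q' f = Kq μ G q (fun y => h y * f y) := by
    intro f
    funext x
    unfold Kq
    refine integral_congr_ae ?_
    have hmeas : Measurable (fun y => G x y * q y) :=
      (hG.comp measurable_prodMk_left).mul hqm
    have hfin : ∀ᵐ y ∂μ, G x y * q y < ∞ :=
      ae_lt_top hmeas (lt_of_le_of_lt (hM x) coe_lt_top).ne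
    filter_upwards [hfin] with y hy
    show (G x y * q' y).toReal * f y = (G x y * q y).toReal * (h y * f y)
    rcases eq_or_ne (q' y) 0 with h0 | h0
    · simp [h0, hh, ENNReal.zero_div]
    · have hb0 : q y ≠ 0 := fun hb => h0 (le_antisymm (hb ▸ hle y) zero_le)
      rcases eq_or_ne (G x y) 0 with ha | ha
      · simp [ha]
      · have hbt : q y ≠ ∞ := by
          intro hb
          rw [hb, ENNReal.mul_top ha] at hy
          exact absurd hy (lt_irrefl _)
        have hat : G x y ≠ ∞ := by
          intro haT
          rw [haT, ENNReal.top_mul hb0] at hy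
          exact absurd hy (lt_irrefl _)
        have hbt' : q' y ≠ ∞ := fun hT => hbt (top_le_iff.mp (hT ▸ hle y))
        have hb0' : (q y).toReal ≠ 0 := ENNReal.toReal_ne_zero.mpr ⟨hb0, hbt⟩
        simp only [hh, ENNReal.toReal_mul, ENNReal.toReal_div]
        field_simp
  refine TotallyBounded.subset ?_ hcomp
  rintro _ ⟨f, ⟨hfm, hfb⟩, rfl⟩
  refine ⟨fun y => h y * f y, ⟨hhm.mul hfm, fun x => ?_⟩, ?_⟩
  · calc |h x * f x| = |h x| * |f x| := abs_mul _ _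
      _ ≤ 1 * 1 := mul_le_mul (hhle x) (hfb x) (abs_nonneg _) zero_le_one
      _ = 1 := mul_one 1
  · exact congrArg UniformFun.ofFun (key f).symm
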